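/- Let n be a positive integer and w, d ∈ ℝⁿ with dᵢ > 0 for all i. (a) Let p ∈ {0,1}ⁿ satisfy (pᵢ = 1 ⟹ wᵢ > 0) and be not identically zero, and set α* = (Σᵢ dᵢ pᵢ |wᵢ|)/(Σᵢ dᵢ pᵢ) = ‖p ⊙ d ⊙ w‖₁/‖p ⊙ d‖₁. Then α* minimizes α ↦ Σᵢ dᵢ(α pᵢ − wᵢ)² over ℝ. (b) Let q ∈ {−1,0}ⁿ satisfy (qᵢ = −1 ⟹ wᵢ < 0) and be not identically zero, and set β* = (Σᵢ dᵢ |qᵢ| |wᵢ|)/(Σᵢ dᵢ |qᵢ|) = ‖q ⊙ d ⊙ w‖₁/‖q ⊙ d‖₁. Then β* minimizes β ↦ Σᵢ dᵢ(β qᵢ − wᵢ)² over ℝ. (Proposition 4, scaling formulas: the optimal positive and negative scaling parameters are d-weighted means of |wᵢ| over the respective supports.) -/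

import Mathlib

lemma aux_quad (n : ℕ) (w d v : Fin n → ℝ)
    (hA : 0 < ∑ i, d i * (v i)^2)
    (c : ℝ) (hc : c = (∑ i, d i * (v i * w i)) / (∑ i, d i * (v i)^2)) :
    ∀ α : ℝ, ∑ i, d i * (c * v i - w i)^2 ≤ ∑ i, d i * (α * v i - w i)^2 := by
  intro α
  set A := ∑ i, d i * (v i)^2 with hAdef
  set B := ∑ i, d i * (v i * w i) with hBdef
  have key : ∀ x : ℝ, ∑ i, d i * (x * v i - w i)^2
      = A * x^2 - 2 * B * x + ∑ i, d i * (w i)^2 := by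
    intro x
    have : ∀ i ∈ Finset.univ, d i * (x * v i - w i)^2
        = (d i * (v i)^2) * x^2 - 2 * x * (d i * (v i * w i)) + d i * (w i)^2 := by
      intro i _; ring
    rw [Finset.sum_congr rfl this, Finset.sum_add_distrib, Finset.sum_sub_distrib,
      ← Finset.sum_mul, ← Finset.mul_sum]
    ring
  have hcA : c * A = B := by
    rw [hc]; exact div_mul_cancel₀ B hA.ne'
  rw [key, key, ← hcA]
  nlinarith [mul_nonneg hA.le (sq_nonneg (α - c))]

/-- Proposition 4, scaling formulas: (a) for an indicator `p ∈ {0,1}ⁿ` supported on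
positive entries of `w` and not identically zero, the `d`-weighted mean
`αstar = ‖p ⊙ d ⊙ w‖₁/‖p ⊙ d‖₁` minimizes `α ↦ ∑ i, d i (α p i − w i)²`;
(b) for a negated indicator `q ∈ {−1,0}ⁿ` supported on negative entries of `w` and
not identically zero, `βstar = ‖q ⊙ d ⊙ w‖₁/‖q ⊙ d‖₁` minimizes
`β ↦ ∑ i, d i (β q i − w i)²`. -/
theorem stmt_11 (n : ℕ) (hn : 0 < n) (w d : Fin n → ℝ) (hd : ∀ i, 0 < d i)
    (p : Fin n → ℝ) (hp : ∀ i, p i ∈ ({0, 1} : Set ℝ))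
    (hpw : ∀ i, p i = 1 → 0 < w i) (hpnz : ∃ i, p i ≠ 0)
    (q : Fin n → ℝ) (hq : ∀ i, q i ∈ ({-1, 0} : Set ℝ))
    (hqw : ∀ i, q i = -1 → w i < 0) (hqnz : ∃ i, q i ≠ 0)
    (αstar βstar : ℝ)
    (hαstar : αstar = (∑ i, d i * p i * |w i|) / (∑ i, d i * p i))
    (hβstar : βstar = (∑ i, d i * |q i| * |w i|) / (∑ i, d i * |q i|)) :
    (∀ α : ℝ, ∑ i, d i * (αstar * p i - w i)^2 ≤ ∑ i, d i * (α * p i - w i)^2) ∧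
    (∀ β : ℝ, ∑ i, d i * (βstar * q i - w i)^2 ≤ ∑ i, d i * (β * q i - w i)^2) := by
  constructor
  · -- part (a)
    apply aux_quad n w d p
    · obtain ⟨j, hj⟩ := hpnz
      have hj1 : p j = 1 := by have := hp j; simp at this; tauto
      apply Finset.sum_pos'
      · intro i _
        have h01 : p i = 0 ∨ p i = 1 := by simpa using hp i
        rcases h01 with h | h <;> simp [h] <;> exact (hd i).le

      · exact ⟨j, Finset.mem_univ j, by rw [hj1]; simpa using hd j⟩
    · rw [hαstar]
      congr 1
      · apply Finset.sum_congr rfl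
        intro i _
        have h01 : p i = 0 ∨ p i = 1 := by simpa using hp i
        rcases h01 with h | h
        · simp [h]
        · rw [h, abs_of_pos (hpw i h)]; ring
      · apply Finset.sum_congr rfl
        intro i _
        have h01 : p i = 0 ∨ p i = 1 := by simpa using hp i
        rcases h01 with h | h <;> simp [h]
  · -- part (b)
    apply aux_quad n w d q
    · obtain ⟨j, hj⟩ := hqnz
      have hj1 : q j = -1 := by have := hq j; simp at this; tauto
      apply Finset.sum_pos'
      · intro i _
        have h01 : q i = -1 ∨ q i = 0 := by simpa using hq i
        rcases h01 with h | h <;> simp [h] <;> exact (hd i).le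

      · refine ⟨j, Finset.mem_univ j, ?_⟩
        rw [hj1]; simpa using hd j
    · rw [hβstar]
      congr 1
      · apply Finset.sum_congr rfl
        intro i _
        have h01 : q i = -1 ∨ q i = 0 := by simpa using hq i
        rcases h01 with h | h
        · rw [h, abs_of_neg (by norm_num), abs_of_neg (hqw i h)]; ring
        · simp [h]
      · apply Finset.sum_congr rfl
        intro i _
        have h01 : q i = -1 ∨ q i = 0 := by simpa using hq i
        rcases h01 with h | h <;> simp [h]
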